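/- arXiv:1904.04753 — 4 statements merged into one kernel-verified Lean document; each statement's English description precedes it below -/
import Mathlib

section
/- The undirected graph G*_u is perfect: for every subset S of {1,…,12}, the independence number of the subgraph of G*_u induced by S equals the clique cover number of the subgraph of G*_u induced by S. -/
/-- The edge set of the undirected graph `G*ᵤ` on vertex set `{1, …, 12}`. -/
def guEdges : Finset (Finset ℕ) :=
  {{1, 5}, {1, 6}, {2, 5}, {2, 6}, {1, 9}, {1, 10}, {3, 9}, {3, 10},
   {5, 9}, {5, 11}, {7, 9}, {7, 11}}

/-- The simple undirected graph `G*ᵤ` on vertex set `{1, …, 12}` (viewed as a graph on `ℕ`;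
every vertex outside `{1, …, 12}` is isolated). -/
def Gu : SimpleGraph ℕ where
  Adj a b := a ≠ b ∧ ({a, b} : Finset ℕ) ∈ guEdges
  symm := by
    constructor
    intro a b h
    refine ⟨h.1.symm, ?_⟩
    rw [Finset.pair_comm]
    exact h.2
  loopless := by
    constructor
    intro a h
    exact h.1 rfl

/-- The independence number of the subgraph of `G` induced by the finite vertex set `S`:
the maximum cardinality of a set `T ⊆ S` of pairwise non-adjacent vertices. -/
noncomputable def alphaOn (G : SimpleGraph ℕ) (S : Finset ℕ) : ℕ :=
  sSup {n : ℕ | ∃ T : Finset ℕ, T ⊆ S ∧ T.card = n ∧ ∀ a ∈ T, ∀ b ∈ T, ¬ G.Adj a b}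

/-- The clique cover number of the subgraph of `G` induced by the finite vertex set `S`:
the minimum number of cliques (contained in `S`) needed to cover all vertices of `S`. -/
noncomputable def cliqueCoverOn (G : SimpleGraph ℕ) (S : Finset ℕ) : ℕ :=
  sInf {n : ℕ | ∃ C : Fin n → Finset ℕ,
    (∀ i, ↑(C i) ⊆ (S : Set ℕ) ∧ G.IsClique (C i)) ∧ ∀ v ∈ S, ∃ i, v ∈ C i}

def guPairs : List (ℕ × ℕ) :=
  [(1,5),(1,6),(2,5),(2,6),(1,9),(1,10),(3,9),(3,10),(5,9),(5,11),(7,9),(7,11)]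

lemma fpair_eq {a b c d : ℕ} :
    ({a, b} : Finset ℕ) = {c, d} ↔ (a = c ∧ b = d) ∨ (a = d ∧ b = c) := by
  rw [← Finset.coe_inj]
  simp only [Finset.coe_insert, Finset.coe_singleton]
  exact Set.pair_eq_pair_iff

lemma adj_iff (a b : ℕ) : Gu.Adj a b ↔ ((a, b) ∈ guPairs ∨ (b, a) ∈ guPairs) := by
  show (a ≠ b ∧ ({a, b} : Finset ℕ) ∈ guEdges) ↔ _
  constructor
  · rintro ⟨hne, hmem⟩
    simp only [guEdges, Finset.mem_insert, Finset.mem_singleton] at hmem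
    rcases hmem with h|h|h|h|h|h|h|h|h|h|h|h <;>
      rcases fpair_eq.mp h with ⟨rfl, rfl⟩ | ⟨rfl, rfl⟩ <;> decide
  · intro h
    simp only [guPairs, List.mem_cons, List.not_mem_nil, or_false, Prod.mk.injEq] at h
    rcases h with (⟨rfl,rfl⟩|⟨rfl,rfl⟩|⟨rfl,rfl⟩|⟨rfl,rfl⟩|⟨rfl,rfl⟩|⟨rfl,rfl⟩|⟨rfl,rfl⟩|⟨rfl,rfl⟩|⟨rfl,rfl⟩|⟨rfl,rfl⟩|⟨rfl,rfl⟩|⟨rfl,rfl⟩)|(⟨rfl,rfl⟩|⟨rfl,rfl⟩|⟨rfl,rfl⟩|⟨rfl,rfl⟩|⟨rfl,rfl⟩|⟨rfl,rfl⟩|⟨rfl,rfl⟩|⟨rfl,rfl⟩|⟨rfl,rfl⟩|⟨rfl,rfl⟩|⟨rfl,rfl⟩|⟨rfl,rfl⟩) <;> decide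

instance : DecidableRel Gu.Adj :=
  fun a b => decidable_of_iff _ (adj_iff a b).symm

/-- A combined witness: an independent set and a clique cover of the same size. -/
def Good (S : Finset ℕ) : Prop :=
  ∃ T : Finset ℕ, ∃ L : List (Finset ℕ),
    T ⊆ S ∧ (∀ a ∈ T, ∀ b ∈ T, ¬ Gu.Adj a b) ∧
    (∀ c ∈ L, c ⊆ S ∧ ∀ a ∈ c, ∀ b ∈ c, a ≠ b → Gu.Adj a b) ∧
    (∀ v ∈ S, ∃ c ∈ L, v ∈ c) ∧ L.length = T.card

lemma good_imp (S : Finset ℕ) (h : Good S) : alphaOn Gu S = cliqueCoverOn Gu S := by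
  obtain ⟨T, L, hTS, hTind, hLc, hLcov, hlen⟩ := h
  set A : Set ℕ := {n : ℕ | ∃ T : Finset ℕ, T ⊆ S ∧ T.card = n ∧ ∀ a ∈ T, ∀ b ∈ T, ¬ Gu.Adj a b}
    with hA
  set B : Set ℕ := {n : ℕ | ∃ C : Fin n → Finset ℕ,
    (∀ i, ↑(C i) ⊆ (S : Set ℕ) ∧ Gu.IsClique (C i)) ∧ ∀ v ∈ S, ∃ i, v ∈ C i} with hB
  have hbdd : BddAbove A := by
    refine ⟨S.card, fun n hn => ?_⟩
    obtain ⟨T', hT'S, rfl, -⟩ := hn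
    exact Finset.card_le_card hT'S
  have hAne : A.Nonempty := ⟨0, ∅, by simp⟩
  have hLB : L.length ∈ B := by
    refine ⟨fun i => L.get i, fun i => ?_, fun v hv => ?_⟩
    · have hm := (hLc (L.get i) (L.get_mem i))
      constructor
      · intro x hx
        exact hm.1 hx
      · intro a ha b hb hab
        exact hm.2 a ha b hb hab
    · obtain ⟨c, hc, hvc⟩ := hLcov v hv
      obtain ⟨i, hi⟩ := List.mem_iff_get.mp hc
      exact ⟨i, show v ∈ L.get i from hi ▸ hvc⟩
  have hTA : T.card ∈ A := ⟨T, hTS, rfl, hTind⟩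
  have key : ∀ n ∈ A, ∀ m ∈ B, n ≤ m := by
    rintro n ⟨T', hT'S, rfl, hind⟩ m ⟨C, hC, hcov⟩
    rcases T'.eq_empty_or_nonempty with rfl | ⟨v0, hv0⟩
    · simp
    · have : Nonempty (Fin m) := by
        obtain ⟨i, -⟩ := hcov v0 (hT'S hv0)
        exact ⟨i⟩
      have hch : ∀ v ∈ T', ∃ i : Fin m, v ∈ C i := fun v hv => hcov v (hT'S hv)
      choose! f hf using hch
      have hinj : Set.InjOn f T' := by
        intro a ha b hb hfab
        by_contra hne
        have hcl := (hC (f a)).2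
        have : Gu.Adj a b := hcl (by exact_mod_cast hf a ha) (by rw [hfab]; exact_mod_cast hf b hb) hne
        exact hind a ha b hb this
      calc T'.card ≤ (Finset.univ : Finset (Fin m)).card :=
            Finset.card_le_card_of_injOn f (fun a _ => Finset.mem_univ _) hinj
        _ = m := Finset.card_fin m
  have h1 : T.card ≤ alphaOn Gu S := le_csSup hbdd hTA
  have h2 : cliqueCoverOn Gu S ≤ L.length := Nat.sInf_le hLB
  have h3 : alphaOn Gu S ≤ cliqueCoverOn Gu S := by
    apply csSup_le hAne
    intro n hn
    exact le_csInf ⟨L.length, hLB⟩ (fun m hm => key n hn m hm)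
  omega

def core : Finset ℕ := {1, 2, 3, 5, 6, 7, 9, 10, 11}

lemma not_adj_of_not_core {v : ℕ} (hv : v ∉ core) (w : ℕ) : ¬ Gu.Adj v w := by
  rintro ⟨-, h2⟩
  have hsub : ∀ e ∈ guEdges, e ⊆ core := by decide
  exact hv (hsub _ h2 (Finset.mem_insert_self v {w}))

lemma good_insert_isolated (S : Finset ℕ) (v : ℕ) (hv : ∀ w, ¬ Gu.Adj v w)
    (hvS : v ∉ S) (h : Good S) : Good (insert v S) := by
  obtain ⟨T, L, hTS, hTind, hLc, hLcov, hlen⟩ := h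
  have hvT : v ∉ T := fun hvT => hvS (hTS hvT)
  refine ⟨insert v T, {v} :: L, ?_, ?_, ?_, ?_, ?_⟩
  · exact Finset.insert_subset_insert v hTS
  · intro a ha b hb
    rcases Finset.mem_insert.mp ha with rfl | ha
    · exact hv b
    · rcases Finset.mem_insert.mp hb with rfl | hb
      · intro hab; exact hv a (Gu.adj_symm hab)
      · exact hTind a ha b hb
  · intro c hc
    rcases List.mem_cons.mp hc with rfl | hc
    · refine ⟨?_, ?_⟩
      · intro x hx
        rw [Finset.mem_singleton] at hx
        exact hx ▸ Finset.mem_insert_self v S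
      · intro a ha b hb hab
        rw [Finset.mem_singleton] at ha hb
        exact absurd (ha.trans hb.symm) hab
    · exact ⟨(hLc c hc).1.trans (Finset.subset_insert v S), (hLc c hc).2⟩
  · intro u hu
    rcases Finset.mem_insert.mp hu with rfl | hu
    · exact ⟨{u}, List.mem_cons_self, Finset.mem_singleton_self u⟩
    · obtain ⟨c, hc, huc⟩ := hLcov u hu
      exact ⟨c, List.mem_cons_of_mem _ hc, huc⟩
  · rw [List.length_cons, hlen, Finset.card_insert_of_notMem hvT]

lemma good_union (D : Finset ℕ) (hD : ∀ v ∈ D, v ∉ core) :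
    ∀ B : Finset ℕ, Good B → (∀ v ∈ D, v ∉ B) → Good (B ∪ D) := by
  induction D using Finset.induction_on with
  | empty => intro B hB _; simpa using hB
  | @insert a D' haD' ih =>
    intro B hB hdisj
    have ha_core : a ∉ core := hD a (Finset.mem_insert_self a D')
    have ha_B : a ∉ B := hdisj a (Finset.mem_insert_self a D')
    have h1 : Good (B ∪ D') := ih (fun v hv => hD v (Finset.mem_insert_of_mem hv)) B hB
      (fun v hv => hdisj v (Finset.mem_insert_of_mem hv))
    have ha : a ∉ B ∪ D' := by
      rw [Finset.mem_union]
      rintro (h | h)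
      · exact ha_B h
      · exact haD' h
    have := good_insert_isolated (B ∪ D') a (not_adj_of_not_core ha_core) ha h1
    rwa [← Finset.union_insert] at this
set_option maxHeartbeats 2000000 in
def witTable : List (List Nat × List (List Nat)) :=
  [([],[]),
   ([1],[[1]]),
   ([2],[[2]]),
   ([1,2],[[1],[2]]),
   ([3],[[3]]),
   ([1,3],[[1],[3]]),
   ([2,3],[[2],[3]]),
   ([1,2,3],[[1],[2],[3]]),
   ([5],[[5]]),
   ([1],[[1,5]]),
   ([2],[[2,5]]),
   ([1,2],[[1,5],[2,5]]),
   ([3,5],[[3],[5]]),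
   ([1,3],[[1,5],[3]]),
   ([2,3],[[2,5],[3]]),
   ([1,2,3],[[1,5],[2,5],[3]]),
   ([6],[[6]]),
   ([1],[[1,6]]),
   ([2],[[2,6]]),
   ([1,2],[[1,6],[2,6]]),
   ([3,6],[[3],[6]]),
   ([1,3],[[1,6],[3]]),
   ([2,3],[[2,6],[3]]),
   ([1,2,3],[[1,6],[2,6],[3]]),
   ([5,6],[[5],[6]]),
   ([5,6],[[1,5],[1,6]]),
   ([5,6],[[2,5],[2,6]]),
   ([1,2],[[1,5],[2,6]]),
   ([3,5,6],[[3],[5],[6]]),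
   ([3,5,6],[[1,5],[3],[1,6]]),
   ([3,5,6],[[2,5],[3],[2,6]]),
   ([1,2,3],[[1,5],[2,6],[3]]),
   ([7],[[7]]),
   ([1,7],[[1],[7]]),
   ([2,7],[[2],[7]]),
   ([1,2,7],[[1],[2],[7]]),
   ([3,7],[[3],[7]]),
   ([1,3,7],[[1],[3],[7]]),
   ([2,3,7],[[2],[3],[7]]),
   ([1,2,3,7],[[1],[2],[3],[7]]),
   ([5,7],[[5],[7]]),
   ([1,7],[[1,5],[7]]),
   ([2,7],[[2,5],[7]]),
   ([1,2,7],[[1,5],[2,5],[7]]),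
   ([3,5,7],[[3],[5],[7]]),
   ([1,3,7],[[1,5],[3],[7]]),
   ([2,3,7],[[2,5],[3],[7]]),
   ([1,2,3,7],[[1,5],[2,5],[3],[7]]),
   ([6,7],[[6],[7]]),
   ([1,7],[[1,6],[7]]),
   ([2,7],[[2,6],[7]]),
   ([1,2,7],[[1,6],[2,6],[7]]),
   ([3,6,7],[[3],[6],[7]]),
   ([1,3,7],[[1,6],[3],[7]]),
   ([2,3,7],[[2,6],[3],[7]]),
   ([1,2,3,7],[[1,6],[2,6],[3],[7]]),
   ([5,6,7],[[5],[6],[7]]),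
   ([5,6,7],[[1,5],[1,6],[7]]),
   ([5,6,7],[[2,5],[2,6],[7]]),
   ([1,2,7],[[1,5],[2,6],[7]]),
   ([3,5,6,7],[[3],[5],[6],[7]]),
   ([3,5,6,7],[[1,5],[3],[1,6],[7]]),
   ([3,5,6,7],[[2,5],[3],[2,6],[7]]),
   ([1,2,3,7],[[1,5],[2,6],[3],[7]]),
   ([9],[[9]]),
   ([1],[[1,9]]),
   ([2,9],[[2],[9]]),
   ([1,2],[[1,9],[2]]),
   ([3],[[3,9]]),
   ([1,3],[[1,9],[3,9]]),
   ([2,3],[[2],[3,9]]),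
   ([1,2,3],[[1,9],[2],[3,9]]),
   ([5],[[5,9]]),
   ([1],[[1,5,9]]),
   ([2,9],[[2,5],[5,9]]),
   ([1,2],[[1,5,9],[2,5]]),
   ([3,5],[[3,9],[5,9]]),
   ([1,3],[[1,5,9],[3,9]]),
   ([2,3],[[2,5],[3,9]]),
   ([1,2,3],[[1,5,9],[2,5],[3,9]]),
   ([6,9],[[6],[9]]),
   ([6,9],[[1,6],[1,9]]),
   ([2,9],[[2,6],[9]]),
   ([1,2],[[1,9],[2,6]]),
   ([3,6],[[3,9],[6]]),
   ([1,3],[[1,6],[3,9]]),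
   ([2,3],[[2,6],[3,9]]),
   ([1,2,3],[[1,6],[2,6],[3,9]]),
   ([5,6],[[5,9],[6]]),
   ([5,6],[[1,5,9],[1,6]]),
   ([2,9],[[2,6],[5,9]]),
   ([1,2],[[1,5,9],[2,6]]),
   ([3,5,6],[[3,9],[5,9],[6]]),
   ([3,5,6],[[1,5,9],[3,9],[1,6]]),
   ([3,5,6],[[2,5],[3,9],[2,6]]),
   ([1,2,3],[[1,5,9],[2,6],[3,9]]),
   ([7],[[7,9]]),
   ([1,7],[[1,9],[7,9]]),
   ([2,7],[[2],[7,9]]),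
   ([1,2,7],[[1,9],[2],[7,9]]),
   ([3,7],[[3,9],[7,9]]),
   ([1,3,7],[[1,9],[3,9],[7,9]]),
   ([2,3,7],[[2],[3,9],[7,9]]),
   ([1,2,3,7],[[1,9],[2],[3,9],[7,9]]),
   ([5,7],[[5,9],[7,9]]),
   ([1,7],[[1,5,9],[7,9]]),
   ([2,7],[[2,5],[7,9]]),
   ([1,2,7],[[1,5,9],[2,5],[7,9]]),
   ([3,5,7],[[3,9],[5,9],[7,9]]),
   ([1,3,7],[[1,5,9],[3,9],[7,9]]),
   ([2,3,7],[[2,5],[3,9],[7,9]]),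
   ([1,2,3,7],[[1,5,9],[2,5],[3,9],[7,9]]),
   ([6,7],[[6],[7,9]]),
   ([1,7],[[1,6],[7,9]]),
   ([2,7],[[2,6],[7,9]]),
   ([1,2,7],[[1,6],[2,6],[7,9]]),
   ([3,6,7],[[3,9],[6],[7,9]]),
   ([1,3,7],[[1,6],[3,9],[7,9]]),
   ([2,3,7],[[2,6],[3,9],[7,9]]),
   ([1,2,3,7],[[1,6],[2,6],[3,9],[7,9]]),
   ([5,6,7],[[5,9],[6],[7,9]]),
   ([5,6,7],[[1,5,9],[1,6],[7,9]]),
   ([5,6,7],[[2,5],[2,6],[7,9]]),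
   ([1,2,7],[[1,5,9],[2,6],[7,9]]),
   ([3,5,6,7],[[3,9],[5,9],[6],[7,9]]),
   ([3,5,6,7],[[1,5,9],[3,9],[1,6],[7,9]]),
   ([3,5,6,7],[[2,5],[3,9],[2,6],[7,9]]),
   ([1,2,3,7],[[1,5,9],[2,6],[3,9],[7,9]]),
   ([10],[[10]]),
   ([1],[[1,10]]),
   ([2,10],[[2],[10]]),
   ([1,2],[[1,10],[2]]),
   ([3],[[3,10]]),
   ([1,3],[[1,10],[3,10]]),
   ([2,3],[[2],[3,10]]),
   ([1,2,3],[[1,10],[2],[3,10]]),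
   ([5,10],[[5],[10]]),
   ([5,10],[[1,5],[1,10]]),
   ([2,10],[[2,5],[10]]),
   ([1,2],[[1,10],[2,5]]),
   ([3,5],[[3,10],[5]]),
   ([1,3],[[1,5],[3,10]]),
   ([2,3],[[2,5],[3,10]]),
   ([1,2,3],[[1,5],[2,5],[3,10]]),
   ([6,10],[[6],[10]]),
   ([6,10],[[1,6],[1,10]]),
   ([2,10],[[2,6],[10]]),
   ([1,2],[[1,10],[2,6]]),
   ([3,6],[[3,10],[6]]),
   ([1,3],[[1,6],[3,10]]),
   ([2,3],[[2,6],[3,10]]),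
   ([1,2,3],[[1,6],[2,6],[3,10]]),
   ([5,6,10],[[5],[6],[10]]),
   ([5,6,10],[[1,5],[1,6],[1,10]]),
   ([5,6,10],[[2,5],[2,6],[10]]),
   ([5,6,10],[[1,5],[2,6],[1,10]]),
   ([3,5,6],[[3,10],[5],[6]]),
   ([3,5,6],[[1,5],[3,10],[1,6]]),
   ([3,5,6],[[2,5],[3,10],[2,6]]),
   ([1,2,3],[[1,5],[2,6],[3,10]]),
   ([7,10],[[7],[10]]),
   ([1,7],[[1,10],[7]]),
   ([2,7,10],[[2],[7],[10]]),
   ([1,2,7],[[1,10],[2],[7]]),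
   ([3,7],[[3,10],[7]]),
   ([1,3,7],[[1,10],[3,10],[7]]),
   ([2,3,7],[[2],[3,10],[7]]),
   ([1,2,3,7],[[1,10],[2],[3,10],[7]]),
   ([5,7,10],[[5],[7],[10]]),
   ([5,7,10],[[1,5],[7],[1,10]]),
   ([2,7,10],[[2,5],[7],[10]]),
   ([1,2,7],[[1,10],[2,5],[7]]),
   ([3,5,7],[[3,10],[5],[7]]),
   ([1,3,7],[[1,5],[3,10],[7]]),
   ([2,3,7],[[2,5],[3,10],[7]]),
   ([1,2,3,7],[[1,5],[2,5],[3,10],[7]]),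
   ([6,7,10],[[6],[7],[10]]),
   ([6,7,10],[[1,6],[7],[1,10]]),
   ([2,7,10],[[2,6],[7],[10]]),
   ([1,2,7],[[1,10],[2,6],[7]]),
   ([3,6,7],[[3,10],[6],[7]]),
   ([1,3,7],[[1,6],[3,10],[7]]),
   ([2,3,7],[[2,6],[3,10],[7]]),
   ([1,2,3,7],[[1,6],[2,6],[3,10],[7]]),
   ([5,6,7,10],[[5],[6],[7],[10]]),
   ([5,6,7,10],[[1,5],[1,6],[7],[1,10]]),
   ([5,6,7,10],[[2,5],[2,6],[7],[10]]),
   ([5,6,7,10],[[1,5],[2,6],[7],[1,10]]),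
   ([3,5,6,7],[[3,10],[5],[6],[7]]),
   ([3,5,6,7],[[1,5],[3,10],[1,6],[7]]),
   ([3,5,6,7],[[2,5],[3,10],[2,6],[7]]),
   ([1,2,3,7],[[1,5],[2,6],[3,10],[7]]),
   ([9,10],[[9],[10]]),
   ([9,10],[[1,9],[1,10]]),
   ([2,9,10],[[2],[9],[10]]),
   ([2,9,10],[[1,9],[2],[1,10]]),
   ([9,10],[[3,9],[3,10]]),
   ([1,3],[[1,9],[3,10]]),
   ([2,9,10],[[2],[3,9],[3,10]]),
   ([1,2,3],[[1,9],[2],[3,10]]),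
   ([5,10],[[5,9],[10]]),
   ([5,10],[[1,5,9],[1,10]]),
   ([2,9,10],[[2,5],[5,9],[10]]),
   ([2,9,10],[[1,5,9],[2,5],[1,10]]),
   ([3,5],[[3,10],[5,9]]),
   ([1,3],[[1,5,9],[3,10]]),
   ([2,9,10],[[2,5],[3,9],[3,10]]),
   ([1,2,3],[[1,5,9],[2,5],[3,10]]),
   ([6,9,10],[[6],[9],[10]]),
   ([6,9,10],[[1,6],[1,9],[1,10]]),
   ([2,9,10],[[2,6],[9],[10]]),
   ([2,9,10],[[1,9],[2,6],[1,10]]),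
   ([6,9,10],[[3,9],[6],[3,10]]),
   ([6,9,10],[[1,6],[3,9],[1,10]]),
   ([2,9,10],[[2,6],[3,9],[3,10]]),
   ([1,2,3],[[1,9],[2,6],[3,10]]),
   ([5,6,10],[[5,9],[6],[10]]),
   ([5,6,10],[[1,5,9],[1,6],[1,10]]),
   ([2,9,10],[[2,6],[5,9],[10]]),
   ([2,9,10],[[1,5,9],[2,6],[1,10]]),
   ([3,5,6],[[3,10],[5,9],[6]]),
   ([3,5,6],[[1,5,9],[3,10],[1,6]]),
   ([2,9,10],[[2,6],[3,10],[5,9]]),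
   ([1,2,3],[[1,5,9],[2,6],[3,10]]),
   ([7,10],[[7,9],[10]]),
   ([1,7],[[1,10],[7,9]]),
   ([2,7,10],[[2],[7,9],[10]]),
   ([1,2,7],[[1,10],[2],[7,9]]),
   ([3,7],[[3,10],[7,9]]),
   ([1,3,7],[[1,9],[3,10],[7,9]]),
   ([2,3,7],[[2],[3,10],[7,9]]),
   ([1,2,3,7],[[1,9],[2],[3,10],[7,9]]),
   ([5,7,10],[[5,9],[7,9],[10]]),
   ([5,7,10],[[1,5,9],[7,9],[1,10]]),
   ([2,7,10],[[2,5],[7,9],[10]]),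
   ([1,2,7],[[1,10],[2,5],[7,9]]),
   ([3,5,7],[[3,10],[5,9],[7,9]]),
   ([1,3,7],[[1,5,9],[3,10],[7,9]]),
   ([2,3,7],[[2,5],[3,10],[7,9]]),
   ([1,2,3,7],[[1,5,9],[2,5],[3,10],[7,9]]),
   ([6,7,10],[[6],[7,9],[10]]),
   ([6,7,10],[[1,6],[7,9],[1,10]]),
   ([2,7,10],[[2,6],[7,9],[10]]),
   ([1,2,7],[[1,10],[2,6],[7,9]]),
   ([3,6,7],[[3,10],[6],[7,9]]),
   ([1,3,7],[[1,6],[3,10],[7,9]]),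
   ([2,3,7],[[2,6],[3,10],[7,9]]),
   ([1,2,3,7],[[1,6],[2,6],[3,10],[7,9]]),
   ([5,6,7,10],[[5,9],[6],[7,9],[10]]),
   ([5,6,7,10],[[1,5,9],[1,6],[7,9],[1,10]]),
   ([5,6,7,10],[[2,5],[2,6],[7,9],[10]]),
   ([5,6,7,10],[[1,5,9],[2,6],[7,9],[1,10]]),
   ([3,5,6,7],[[3,10],[5,9],[6],[7,9]]),
   ([3,5,6,7],[[1,5,9],[3,10],[1,6],[7,9]]),
   ([3,5,6,7],[[2,5],[3,10],[2,6],[7,9]]),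
   ([1,2,3,7],[[1,5,9],[2,6],[3,10],[7,9]]),
   ([11],[[11]]),
   ([1,11],[[1],[11]]),
   ([2,11],[[2],[11]]),
   ([1,2,11],[[1],[2],[11]]),
   ([3,11],[[3],[11]]),
   ([1,3,11],[[1],[3],[11]]),
   ([2,3,11],[[2],[3],[11]]),
   ([1,2,3,11],[[1],[2],[3],[11]]),
   ([5],[[5,11]]),
   ([1,11],[[1,5],[5,11]]),
   ([2,11],[[2,5],[5,11]]),
   ([1,2,11],[[1,5],[2,5],[5,11]]),
   ([3,5],[[3],[5,11]]),
   ([1,3,11],[[1,5],[3],[5,11]]),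
   ([2,3,11],[[2,5],[3],[5,11]]),
   ([1,2,3,11],[[1,5],[2,5],[3],[5,11]]),
   ([6,11],[[6],[11]]),
   ([1,11],[[1,6],[11]]),
   ([2,11],[[2,6],[11]]),
   ([1,2,11],[[1,6],[2,6],[11]]),
   ([3,6,11],[[3],[6],[11]]),
   ([1,3,11],[[1,6],[3],[11]]),
   ([2,3,11],[[2,6],[3],[11]]),
   ([1,2,3,11],[[1,6],[2,6],[3],[11]]),
   ([5,6],[[5,11],[6]]),
   ([1,11],[[1,6],[5,11]]),
   ([2,11],[[2,6],[5,11]]),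
   ([1,2,11],[[1,5],[2,6],[5,11]]),
   ([3,5,6],[[3],[5,11],[6]]),
   ([1,3,11],[[1,6],[3],[5,11]]),
   ([2,3,11],[[2,6],[3],[5,11]]),
   ([1,2,3,11],[[1,5],[2,6],[3],[5,11]]),
   ([7],[[7,11]]),
   ([1,7],[[1],[7,11]]),
   ([2,7],[[2],[7,11]]),
   ([1,2,7],[[1],[2],[7,11]]),
   ([3,7],[[3],[7,11]]),
   ([1,3,7],[[1],[3],[7,11]]),
   ([2,3,7],[[2],[3],[7,11]]),
   ([1,2,3,7],[[1],[2],[3],[7,11]]),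
   ([5,7],[[5,11],[7,11]]),
   ([1,7],[[1,5],[7,11]]),
   ([2,7],[[2,5],[7,11]]),
   ([1,2,7],[[1,5],[2,5],[7,11]]),
   ([3,5,7],[[3],[5,11],[7,11]]),
   ([1,3,7],[[1,5],[3],[7,11]]),
   ([2,3,7],[[2,5],[3],[7,11]]),
   ([1,2,3,7],[[1,5],[2,5],[3],[7,11]]),
   ([6,7],[[6],[7,11]]),
   ([1,7],[[1,6],[7,11]]),
   ([2,7],[[2,6],[7,11]]),
   ([1,2,7],[[1,6],[2,6],[7,11]]),
   ([3,6,7],[[3],[6],[7,11]]),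
   ([1,3,7],[[1,6],[3],[7,11]]),
   ([2,3,7],[[2,6],[3],[7,11]]),
   ([1,2,3,7],[[1,6],[2,6],[3],[7,11]]),
   ([5,6,7],[[5,11],[6],[7,11]]),
   ([5,6,7],[[1,5],[1,6],[7,11]]),
   ([5,6,7],[[2,5],[2,6],[7,11]]),
   ([1,2,7],[[1,5],[2,6],[7,11]]),
   ([3,5,6,7],[[3],[5,11],[6],[7,11]]),
   ([3,5,6,7],[[1,5],[3],[1,6],[7,11]]),
   ([3,5,6,7],[[2,5],[3],[2,6],[7,11]]),
   ([1,2,3,7],[[1,5],[2,6],[3],[7,11]]),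
   ([9,11],[[9],[11]]),
   ([1,11],[[1,9],[11]]),
   ([2,9,11],[[2],[9],[11]]),
   ([1,2,11],[[1,9],[2],[11]]),
   ([3,11],[[3,9],[11]]),
   ([1,3,11],[[1,9],[3,9],[11]]),
   ([2,3,11],[[2],[3,9],[11]]),
   ([1,2,3,11],[[1,9],[2],[3,9],[11]]),
   ([9,11],[[5,9],[5,11]]),
   ([1,11],[[1,5,9],[5,11]]),
   ([2,9,11],[[2,5],[5,9],[5,11]]),
   ([1,2,11],[[1,5,9],[2,5],[5,11]]),
   ([3,5],[[3,9],[5,11]]),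
   ([1,3,11],[[1,5,9],[3,9],[5,11]]),
   ([2,3,11],[[2,5],[3,9],[5,11]]),
   ([1,2,3,11],[[1,5,9],[2,5],[3,9],[5,11]]),
   ([6,9,11],[[6],[9],[11]]),
   ([6,9,11],[[1,6],[1,9],[11]]),
   ([2,9,11],[[2,6],[9],[11]]),
   ([1,2,11],[[1,9],[2,6],[11]]),
   ([3,6,11],[[3,9],[6],[11]]),
   ([1,3,11],[[1,6],[3,9],[11]]),
   ([2,3,11],[[2,6],[3,9],[11]]),
   ([1,2,3,11],[[1,6],[2,6],[3,9],[11]]),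
   ([6,9,11],[[5,9],[6],[5,11]]),
   ([6,9,11],[[1,5,9],[1,6],[5,11]]),
   ([2,9,11],[[2,6],[5,9],[5,11]]),
   ([1,2,11],[[1,5,9],[2,6],[5,11]]),
   ([3,5,6],[[3,9],[5,11],[6]]),
   ([1,3,11],[[1,6],[3,9],[5,11]]),
   ([2,3,11],[[2,6],[3,9],[5,11]]),
   ([1,2,3,11],[[1,5,9],[2,6],[3,9],[5,11]]),
   ([9,11],[[7,9],[7,11]]),
   ([1,7],[[1,9],[7,11]]),
   ([2,9,11],[[2],[7,9],[7,11]]),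
   ([1,2,7],[[1,9],[2],[7,11]]),
   ([3,7],[[3,9],[7,11]]),
   ([1,3,7],[[1,9],[3,9],[7,11]]),
   ([2,3,7],[[2],[3,9],[7,11]]),
   ([1,2,3,7],[[1,9],[2],[3,9],[7,11]]),
   ([5,7],[[5,9],[7,11]]),
   ([1,7],[[1,5,9],[7,11]]),
   ([2,9,11],[[2,5],[7,9],[5,11]]),
   ([1,2,7],[[1,5,9],[2,5],[7,11]]),
   ([3,5,7],[[3,9],[5,9],[7,11]]),
   ([1,3,7],[[1,5,9],[3,9],[7,11]]),
   ([2,3,7],[[2,5],[3,9],[7,11]]),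
   ([1,2,3,7],[[1,5,9],[2,5],[3,9],[7,11]]),
   ([6,9,11],[[6],[7,9],[7,11]]),
   ([6,9,11],[[1,6],[7,9],[7,11]]),
   ([2,9,11],[[2,6],[7,9],[7,11]]),
   ([1,2,7],[[1,9],[2,6],[7,11]]),
   ([3,6,7],[[3,9],[6],[7,11]]),
   ([1,3,7],[[1,6],[3,9],[7,11]]),
   ([2,3,7],[[2,6],[3,9],[7,11]]),
   ([1,2,3,7],[[1,6],[2,6],[3,9],[7,11]]),
   ([5,6,7],[[5,9],[6],[7,11]]),
   ([5,6,7],[[1,5,9],[1,6],[7,11]]),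
   ([2,9,11],[[2,6],[5,9],[7,11]]),
   ([1,2,7],[[1,5,9],[2,6],[7,11]]),
   ([3,5,6,7],[[3,9],[5,9],[6],[7,11]]),
   ([3,5,6,7],[[1,5,9],[3,9],[1,6],[7,11]]),
   ([3,5,6,7],[[2,5],[3,9],[2,6],[7,11]]),
   ([1,2,3,7],[[1,5,9],[2,6],[3,9],[7,11]]),
   ([10,11],[[10],[11]]),
   ([1,11],[[1,10],[11]]),
   ([2,10,11],[[2],[10],[11]]),
   ([1,2,11],[[1,10],[2],[11]]),
   ([3,11],[[3,10],[11]]),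
   ([1,3,11],[[1,10],[3,10],[11]]),
   ([2,3,11],[[2],[3,10],[11]]),
   ([1,2,3,11],[[1,10],[2],[3,10],[11]]),
   ([5,10],[[5,11],[10]]),
   ([1,11],[[1,10],[5,11]]),
   ([2,10,11],[[2,5],[10],[5,11]]),
   ([1,2,11],[[1,10],[2,5],[5,11]]),
   ([3,5],[[3,10],[5,11]]),
   ([1,3,11],[[1,5],[3,10],[5,11]]),
   ([2,3,11],[[2,5],[3,10],[5,11]]),
   ([1,2,3,11],[[1,5],[2,5],[3,10],[5,11]]),
   ([6,10,11],[[6],[10],[11]]),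
   ([6,10,11],[[1,6],[1,10],[11]]),
   ([2,10,11],[[2,6],[10],[11]]),
   ([1,2,11],[[1,10],[2,6],[11]]),
   ([3,6,11],[[3,10],[6],[11]]),
   ([1,3,11],[[1,6],[3,10],[11]]),
   ([2,3,11],[[2,6],[3,10],[11]]),
   ([1,2,3,11],[[1,6],[2,6],[3,10],[11]]),
   ([5,6,10],[[5,11],[6],[10]]),
   ([5,6,10],[[1,6],[5,11],[1,10]]),
   ([2,10,11],[[2,6],[5,11],[10]]),
   ([1,2,11],[[1,10],[2,6],[5,11]]),
   ([3,5,6],[[3,10],[5,11],[6]]),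
   ([1,3,11],[[1,6],[3,10],[5,11]]),
   ([2,3,11],[[2,6],[3,10],[5,11]]),
   ([1,2,3,11],[[1,5],[2,6],[3,10],[5,11]]),
   ([7,10],[[7,11],[10]]),
   ([1,7],[[1,10],[7,11]]),
   ([2,7,10],[[2],[7,11],[10]]),
   ([1,2,7],[[1,10],[2],[7,11]]),
   ([3,7],[[3,10],[7,11]]),
   ([1,3,7],[[1,10],[3,10],[7,11]]),
   ([2,3,7],[[2],[3,10],[7,11]]),
   ([1,2,3,7],[[1,10],[2],[3,10],[7,11]]),
   ([5,7,10],[[5,11],[7,11],[10]]),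
   ([5,7,10],[[1,5],[7,11],[1,10]]),
   ([2,7,10],[[2,5],[7,11],[10]]),
   ([1,2,7],[[1,10],[2,5],[7,11]]),
   ([3,5,7],[[3,10],[5,11],[7,11]]),
   ([1,3,7],[[1,5],[3,10],[7,11]]),
   ([2,3,7],[[2,5],[3,10],[7,11]]),
   ([1,2,3,7],[[1,5],[2,5],[3,10],[7,11]]),
   ([6,7,10],[[6],[7,11],[10]]),
   ([6,7,10],[[1,6],[7,11],[1,10]]),
   ([2,7,10],[[2,6],[7,11],[10]]),
   ([1,2,7],[[1,10],[2,6],[7,11]]),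
   ([3,6,7],[[3,10],[6],[7,11]]),
   ([1,3,7],[[1,6],[3,10],[7,11]]),
   ([2,3,7],[[2,6],[3,10],[7,11]]),
   ([1,2,3,7],[[1,6],[2,6],[3,10],[7,11]]),
   ([5,6,7,10],[[5,11],[6],[7,11],[10]]),
   ([5,6,7,10],[[1,5],[1,6],[7,11],[1,10]]),
   ([5,6,7,10],[[2,5],[2,6],[7,11],[10]]),
   ([5,6,7,10],[[1,5],[2,6],[7,11],[1,10]]),
   ([3,5,6,7],[[3,10],[5,11],[6],[7,11]]),
   ([3,5,6,7],[[1,5],[3,10],[1,6],[7,11]]),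
   ([3,5,6,7],[[2,5],[3,10],[2,6],[7,11]]),
   ([1,2,3,7],[[1,5],[2,6],[3,10],[7,11]]),
   ([9,10,11],[[9],[10],[11]]),
   ([9,10,11],[[1,9],[1,10],[11]]),
   ([2,9,10,11],[[2],[9],[10],[11]]),
   ([2,9,10,11],[[1,9],[2],[1,10],[11]]),
   ([9,10,11],[[3,9],[3,10],[11]]),
   ([1,3,11],[[1,9],[3,10],[11]]),
   ([2,9,10,11],[[2],[3,9],[3,10],[11]]),
   ([1,2,3,11],[[1,9],[2],[3,10],[11]]),
   ([9,10,11],[[5,9],[10],[5,11]]),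
   ([9,10,11],[[1,5,9],[1,10],[5,11]]),
   ([2,9,10,11],[[2,5],[5,9],[10],[5,11]]),
   ([2,9,10,11],[[1,5,9],[2,5],[1,10],[5,11]]),
   ([9,10,11],[[3,9],[5,11],[3,10]]),
   ([1,3,11],[[1,5,9],[3,10],[5,11]]),
   ([2,9,10,11],[[2,5],[3,9],[3,10],[5,11]]),
   ([1,2,3,11],[[1,5,9],[2,5],[3,10],[5,11]]),
   ([6,9,10,11],[[6],[9],[10],[11]]),
   ([6,9,10,11],[[1,6],[1,9],[1,10],[11]]),
   ([2,9,10,11],[[2,6],[9],[10],[11]]),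
   ([2,9,10,11],[[1,9],[2,6],[1,10],[11]]),
   ([6,9,10,11],[[3,9],[6],[3,10],[11]]),
   ([6,9,10,11],[[1,6],[3,9],[1,10],[11]]),
   ([2,9,10,11],[[2,6],[3,9],[3,10],[11]]),
   ([1,2,3,11],[[1,9],[2,6],[3,10],[11]]),
   ([6,9,10,11],[[5,9],[6],[10],[5,11]]),
   ([6,9,10,11],[[1,5,9],[1,6],[1,10],[5,11]]),
   ([2,9,10,11],[[2,6],[5,9],[10],[5,11]]),
   ([2,9,10,11],[[1,5,9],[2,6],[1,10],[5,11]]),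
   ([6,9,10,11],[[3,9],[5,11],[6],[3,10]]),
   ([6,9,10,11],[[1,5,9],[3,10],[1,6],[5,11]]),
   ([2,9,10,11],[[2,6],[3,9],[5,11],[3,10]]),
   ([1,2,3,11],[[1,5,9],[2,6],[3,10],[5,11]]),
   ([9,10,11],[[7,9],[10],[7,11]]),
   ([9,10,11],[[1,9],[7,11],[1,10]]),
   ([2,9,10,11],[[2],[7,9],[10],[7,11]]),
   ([2,9,10,11],[[1,9],[2],[7,11],[1,10]]),
   ([9,10,11],[[3,9],[7,11],[3,10]]),
   ([1,3,7],[[1,9],[3,10],[7,11]]),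
   ([2,9,10,11],[[2],[3,9],[7,11],[3,10]]),
   ([1,2,3,7],[[1,9],[2],[3,10],[7,11]]),
   ([5,7,10],[[5,9],[7,11],[10]]),
   ([5,7,10],[[1,5,9],[7,11],[1,10]]),
   ([2,9,10,11],[[2,5],[7,9],[10],[5,11]]),
   ([2,9,10,11],[[1,5,9],[2,5],[7,11],[1,10]]),
   ([3,5,7],[[3,10],[5,9],[7,11]]),
   ([1,3,7],[[1,5,9],[3,10],[7,11]]),
   ([2,9,10,11],[[2,5],[3,9],[7,11],[3,10]]),
   ([1,2,3,7],[[1,5,9],[2,5],[3,10],[7,11]]),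
   ([6,9,10,11],[[6],[7,9],[10],[7,11]]),
   ([6,9,10,11],[[1,6],[7,9],[1,10],[7,11]]),
   ([2,9,10,11],[[2,6],[7,9],[10],[7,11]]),
   ([2,9,10,11],[[1,9],[2,6],[7,11],[1,10]]),
   ([6,9,10,11],[[3,9],[6],[7,11],[3,10]]),
   ([6,9,10,11],[[1,6],[3,9],[7,11],[1,10]]),
   ([2,9,10,11],[[2,6],[3,9],[7,11],[3,10]]),
   ([1,2,3,7],[[1,9],[2,6],[3,10],[7,11]]),
   ([5,6,7,10],[[5,9],[6],[7,11],[10]]),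
   ([5,6,7,10],[[1,5,9],[1,6],[7,11],[1,10]]),
   ([2,9,10,11],[[2,6],[5,9],[7,11],[10]]),
   ([2,9,10,11],[[1,5,9],[2,6],[7,11],[1,10]]),
   ([3,5,6,7],[[3,10],[5,9],[6],[7,11]]),
   ([3,5,6,7],[[1,5,9],[3,10],[1,6],[7,11]]),
   ([2,9,10,11],[[2,6],[3,10],[5,9],[7,11]]),
   ([1,2,3,7],[[1,5,9],[2,6],[3,10],[7,11]])]


def witI (n : ℕ) : Finset ℕ := ((witTable.getD n ([], [])).1).toFinset
def witC (n : ℕ) : List (Finset ℕ) := ((witTable.getD n ([], [])).2).map List.toFinset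

def mask (S : Finset ℕ) : ℕ :=
  (if 1 ∈ S then 1 else 0) + (if 2 ∈ S then 2 else 0) + (if 3 ∈ S then 4 else 0) +
  (if 5 ∈ S then 8 else 0) + (if 6 ∈ S then 16 else 0) + (if 7 ∈ S then 32 else 0) +
  (if 9 ∈ S then 64 else 0) + (if 10 ∈ S then 128 else 0) + (if 11 ∈ S then 256 else 0)

def check (S : Finset ℕ) : Prop :=
  witI (mask S) ⊆ S ∧ (∀ a ∈ witI (mask S), ∀ b ∈ witI (mask S), ¬ Gu.Adj a b) ∧
  (∀ c ∈ witC (mask S), c ⊆ S ∧ ∀ a ∈ c, ∀ b ∈ c, a ≠ b → Gu.Adj a b) ∧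
  (∀ v ∈ S, ∃ c ∈ witC (mask S), v ∈ c) ∧ (witC (mask S)).length = (witI (mask S)).card

instance (S : Finset ℕ) : Decidable (check S) := by
  unfold check
  exact inferInstance

set_option maxRecDepth 100000 in
set_option maxHeartbeats 0 in
lemma good_core : ∀ B ⊆ core, Good B := by
  have key : ∀ B ∈ core.powerset, check B := by decide
  intro B hB
  obtain ⟨h1, h2, h3, h4, h5⟩ := key B (Finset.mem_powerset.mpr hB)
  exact ⟨witI (mask B), witC (mask B), h1, h2, h3, h4, h5⟩

theorem Gu_is_perfect (S : Finset ℕ) (hS : S ⊆ Finset.Icc 1 12) :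
    alphaOn Gu S = cliqueCoverOn Gu S := by
  apply good_imp
  have hSC : Good (S ∩ core) := good_core _ (Finset.inter_subset_right)
  have h := good_union (S \ core) (fun v hv => (Finset.mem_sdiff.mp hv).2)
    (S ∩ core) hSC
    (fun v hv hvi => (Finset.mem_sdiff.mp hv).2 (Finset.mem_inter.mp hvi).2)
  rwa [Finset.union_comm, Finset.sdiff_union_inter] at h
end

section
/- The graph G*_u contains no odd antihole: there is no subset S of {1,…,12} of odd cardinality at least 5 such that the subgraph of the complement of G*_u induced by S is a cycle. -/
/-- The subgraph of `G` induced by `S` is a cycle on `2 * k + 5` vertices: the vertices of `S`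
can be ordered `v 0, v 1, …` (cyclically) so that the edges of `G` between vertices of `S` are
exactly the consecutive ones. -/
def InducedIsOddCycle (G : SimpleGraph ℕ) (S : Finset ℕ) (k : ℕ) : Prop :=
  S.card = 2 * k + 5 ∧
    ∃ v : Fin (2 * k + 5) → ℕ, Function.Injective v ∧ (∀ i, v i ∈ S) ∧
      ∀ i j, G.Adj (v i) (v j) ↔ (j = i + 1 ∨ i = j + 1)

/-! ### Auxiliary machinery -/

def Q (x y : ℕ) : Prop :=
  (x=1∧y=5)∨(x=5∧y=1)∨(x=1∧y=6)∨(x=6∧y=1)∨(x=2∧y=5)∨(x=5∧y=2)∨(x=2∧y=6)∨(x=6∧y=2)∨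
  (x=1∧y=9)∨(x=9∧y=1)∨(x=1∧y=10)∨(x=10∧y=1)∨(x=3∧y=9)∨(x=9∧y=3)∨(x=3∧y=10)∨(x=10∧y=3)∨
  (x=5∧y=9)∨(x=9∧y=5)∨(x=5∧y=11)∨(x=11∧y=5)∨(x=7∧y=9)∨(x=9∧y=7)∨(x=7∧y=11)∨(x=11∧y=7)

instance Qdec : ∀ x y : ℕ, Decidable (Q x y) := fun x y => by unfold Q; infer_instance

lemma pairEq {x y a b : ℕ} (h : ({x,y}:Finset ℕ) = {a,b}) : (x=a∧y=b)∨(x=b∧y=a) := by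
  have : ({x,y}:Set ℕ) = {a,b} := by
    have := congrArg (fun s : Finset ℕ => (s:Set ℕ)) h
    simpa using this
  exact Set.pair_eq_pair_iff.mp this

lemma adj_imp {x y : ℕ} (h : Gu.Adj x y) : Q x y := by
  obtain ⟨hne, hm⟩ := h
  simp only [guEdges, Finset.mem_insert, Finset.mem_singleton] at hm
  rcases hm with h|h|h|h|h|h|h|h|h|h|h|h <;> rcases pairEq h with ⟨rfl,rfl⟩|⟨rfl,rfl⟩ <;>
    · show Q _ _
      unfold Q
      norm_num

lemma adj_of {x y : ℕ} (h : Q x y) : Gu.Adj x y := by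
  refine ⟨?_, ?_⟩ <;>
  · unfold Q at h
    rcases h with ⟨rfl,rfl⟩|⟨rfl,rfl⟩|⟨rfl,rfl⟩|⟨rfl,rfl⟩|⟨rfl,rfl⟩|⟨rfl,rfl⟩|⟨rfl,rfl⟩|⟨rfl,rfl⟩|⟨rfl,rfl⟩|⟨rfl,rfl⟩|⟨rfl,rfl⟩|⟨rfl,rfl⟩|⟨rfl,rfl⟩|⟨rfl,rfl⟩|⟨rfl,rfl⟩|⟨rfl,rfl⟩|⟨rfl,rfl⟩|⟨rfl,rfl⟩|⟨rfl,rfl⟩|⟨rfl,rfl⟩|⟨rfl,rfl⟩|⟨rfl,rfl⟩|⟨rfl,rfl⟩|⟨rfl,rfl⟩ <;> decide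

set_option synthInstance.maxSize 4000
set_option synthInstance.maxHeartbeats 2000000
def L : List ℕ := [1,2,3,5,6,7,9,10,11]

lemma Qmem {x y : ℕ} (h : Q x y) : x ∈ L ∧ y ∈ L := by
  unfold Q at h
  rcases h with ⟨rfl,rfl⟩|⟨rfl,rfl⟩|⟨rfl,rfl⟩|⟨rfl,rfl⟩|⟨rfl,rfl⟩|⟨rfl,rfl⟩|⟨rfl,rfl⟩|⟨rfl,rfl⟩|⟨rfl,rfl⟩|⟨rfl,rfl⟩|⟨rfl,rfl⟩|⟨rfl,rfl⟩|⟨rfl,rfl⟩|⟨rfl,rfl⟩|⟨rfl,rfl⟩|⟨rfl,rfl⟩|⟨rfl,rfl⟩|⟨rfl,rfl⟩|⟨rfl,rfl⟩|⟨rfl,rfl⟩|⟨rfl,rfl⟩|⟨rfl,rfl⟩|⟨rfl,rfl⟩|⟨rfl,rfl⟩ <;> exact ⟨by decide, by decide⟩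

/-- There is no induced 5-cycle in `Gu`. -/
lemma main5 : ∀ a0 ∈ L, ∀ a2 ∈ L, Q a0 a2 → ∀ a3 ∈ L, Q a0 a3 → ¬ Q a2 a3 → a2 ≠ a3 →
    ∀ a4 ∈ L, Q a2 a4 → ¬ Q a3 a4 → ¬ Q a4 a0 → a4 ≠ a0 → a4 ≠ a2 → a4 ≠ a3 →
    ∀ a1 ∈ L, Q a1 a3 → Q a1 a4 → ¬ Q a0 a1 → ¬ Q a1 a2 →
    a1 ≠ a0 → a1 ≠ a2 → a1 ≠ a3 → a1 ≠ a4 → False := by decide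

/-- A vertex with four distinct neighbours is `1`, `5` or `9`. -/
lemma deg4 : ∀ x ∈ L, ∀ y1 ∈ L, Q x y1 → ∀ y2 ∈ L, Q x y2 → y1 ≠ y2 →
    ∀ y3 ∈ L, Q x y3 → y1 ≠ y3 → y2 ≠ y3 → ∀ y4 ∈ L, Q x y4 → y1 ≠ y4 → y2 ≠ y4 → y3 ≠ y4 →
    x = 1 ∨ x = 5 ∨ x = 9 := by decide

lemma fin_ne_succ {n : ℕ} [NeZero n] (hn : 7 ≤ n) {a b : ℕ} (ha' : a < n) (hb' : b < n)
    (ha : a ≤ 6) (hb : b ≤ 6) (hab : b ≠ a + 1) (h60 : ¬(a = 6 ∧ b = 0)) :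
    (⟨b, hb'⟩ : Fin n) ≠ ⟨a, ha'⟩ + 1 := by
  intro h
  have hv : b = (a + 1 % n) % n := by
    have := congrArg Fin.val h
    simpa [Fin.val_add, Fin.val_one'] using this
  rcases Nat.lt_or_ge 7 n with h'|h'
  · rw [Nat.mod_eq_of_lt (show (1:ℕ) < n by omega)] at hv
    rw [Nat.mod_eq_of_lt (show a + 1 < n by omega)] at hv
    omega
  · have hn7 : n = 7 := le_antisymm h' hn
    subst hn7
    omega

/-- `G*ᵤ` contains no odd antihole: no subset `S ⊆ {1, …, 12}` of odd cardinality at least `5`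
induces a cycle in the complement of `G*ᵤ`. -/
theorem Gu_has_no_odd_antihole :
    ¬ ∃ (S : Finset ℕ) (k : ℕ), S ⊆ Finset.Icc 1 12 ∧ InducedIsOddCycle Guᶜ S k := by
  rintro ⟨S, k, -, -, v, hinj, -, hadj⟩
  have hAdj : ∀ i j : Fin (2*k+5), i ≠ j → ¬(j = i + 1 ∨ i = j + 1) → Gu.Adj (v i) (v j) := by
    intro i j hij hnc
    by_contra hno
    exact hnc ((hadj i j).mp ((SimpleGraph.compl_adj _ _ _).mpr ⟨fun h => hij (hinj h), hno⟩))
  have hNAdj : ∀ i j : Fin (2*k+5), (j = i + 1 ∨ i = j + 1) → ¬ Gu.Adj (v i) (v j) := by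
    intro i j hc
    exact ((SimpleGraph.compl_adj _ _ _).mp ((hadj i j).mpr hc)).2
  have hD : ∀ i j : Fin (2*k+5), i ≠ j → v i ≠ v j := fun i j h e => h (hinj e)
  rcases k with _|k
  · -- k = 0 : an induced 5-cycle in the complement, i.e. an induced 5-cycle in Gu
    have A02 := hAdj 0 2 (by decide) (by decide)
    have A03 := hAdj 0 3 (by decide) (by decide)
    have A13 := hAdj 1 3 (by decide) (by decide)
    have A14 := hAdj 1 4 (by decide) (by decide)
    have A24 := hAdj 2 4 (by decide) (by decide)
    have N01 := hNAdj 0 1 (by decide)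
    have N12 := hNAdj 1 2 (by decide)
    have N23 := hNAdj 2 3 (by decide)
    have N34 := hNAdj 3 4 (by decide)
    have N40 := hNAdj 4 0 (by decide)
    have q02 := adj_imp A02
    have q03 := adj_imp A03
    have q13 := adj_imp A13
    have q14 := adj_imp A14
    have q24 := adj_imp A24
    exact main5 (v 0) (Qmem q02).1 (v 2) (Qmem q02).2 q02
      (v 3) (Qmem q03).2 q03 (fun h => N23 (adj_of h)) (hD 2 3 (by decide))
      (v 4) (Qmem q14).2 q24 (fun h => N34 (adj_of h)) (fun h => N40 (adj_of h))
      (hD 4 0 (by decide)) (hD 4 2 (by decide)) (hD 4 3 (by decide))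
      (v 1) (Qmem q13).1 q13 q14 (fun h => N01 (adj_of h)) (fun h => N12 (adj_of h))
      (hD 1 0 (by decide)) (hD 1 2 (by decide)) (hD 1 3 (by decide)) (hD 1 4 (by decide))
  · -- k ≥ 1 : every cycle vertex has four distinct neighbours in Gu
    have hn : 7 ≤ 2*(k+1)+5 := by omega
    have key : ∀ a b : ℕ, ∀ (ha6 : a ≤ 6) (hb6 : b ≤ 6), a ≠ b → b ≠ a+1 → a ≠ b+1 →
        ¬(a=6∧b=0) → ¬(b=6∧a=0) →
        Gu.Adj (v ⟨a, by omega⟩) (v ⟨b, by omega⟩) := by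
      intro a b ha hb hne h1 h2 h3 h4
      apply hAdj
      · simp only [ne_eq, Fin.mk.injEq]; omega
      · rintro (h|h)
        · exact fin_ne_succ hn _ _ ha hb h1 h3 h
        · exact fin_ne_succ hn _ _ hb ha h2 h4 h
    have dd : ∀ a b : ℕ, ∀ (ha : a < 2*(k+1)+5) (hb : b < 2*(k+1)+5), a ≠ b →
        v ⟨a, ha⟩ ≠ v ⟨b, hb⟩ := by
      intro a b ha hb h
      exact hD _ _ (by simp only [ne_eq, Fin.mk.injEq]; omega)
    have q02 := adj_imp (key 0 2 (by omega) (by omega) (by omega) (by omega) (by omega) (by omega) (by omega))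
    have q03 := adj_imp (key 0 3 (by omega) (by omega) (by omega) (by omega) (by omega) (by omega) (by omega))
    have q04 := adj_imp (key 0 4 (by omega) (by omega) (by omega) (by omega) (by omega) (by omega) (by omega))
    have q05 := adj_imp (key 0 5 (by omega) (by omega) (by omega) (by omega) (by omega) (by omega) (by omega))
    have q13 := adj_imp (key 1 3 (by omega) (by omega) (by omega) (by omega) (by omega) (by omega) (by omega))
    have q14 := adj_imp (key 1 4 (by omega) (by omega) (by omega) (by omega) (by omega) (by omega) (by omega))
    have q15 := adj_imp (key 1 5 (by omega) (by omega) (by omega) (by omega) (by omega) (by omega) (by omega))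
    have q16 := adj_imp (key 1 6 (by omega) (by omega) (by omega) (by omega) (by omega) (by omega) (by omega))
    have q24 := adj_imp (key 2 4 (by omega) (by omega) (by omega) (by omega) (by omega) (by omega) (by omega))
    have q25 := adj_imp (key 2 5 (by omega) (by omega) (by omega) (by omega) (by omega) (by omega) (by omega))
    have q26 := adj_imp (key 2 6 (by omega) (by omega) (by omega) (by omega) (by omega) (by omega) (by omega))
    have q20 := adj_imp (key 2 0 (by omega) (by omega) (by omega) (by omega) (by omega) (by omega) (by omega))
    have q35 := adj_imp (key 3 5 (by omega) (by omega) (by omega) (by omega) (by omega) (by omega) (by omega))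
    have q36 := adj_imp (key 3 6 (by omega) (by omega) (by omega) (by omega) (by omega) (by omega) (by omega))
    have q30 := adj_imp (key 3 0 (by omega) (by omega) (by omega) (by omega) (by omega) (by omega) (by omega))
    have q31 := adj_imp (key 3 1 (by omega) (by omega) (by omega) (by omega) (by omega) (by omega) (by omega))
    have h0 := deg4 _ (Qmem q02).1 _ (Qmem q02).2 q02 _ (Qmem q03).2 q03
      (dd 2 3 (by omega) (by omega) (by omega)) _ (Qmem q04).2 q04
      (dd 2 4 (by omega) (by omega) (by omega)) (dd 3 4 (by omega) (by omega) (by omega))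
      _ (Qmem q05).2 q05 (dd 2 5 (by omega) (by omega) (by omega))
      (dd 3 5 (by omega) (by omega) (by omega)) (dd 4 5 (by omega) (by omega) (by omega))
    have h1 := deg4 _ (Qmem q13).1 _ (Qmem q13).2 q13 _ (Qmem q14).2 q14
      (dd 3 4 (by omega) (by omega) (by omega)) _ (Qmem q15).2 q15
      (dd 3 5 (by omega) (by omega) (by omega)) (dd 4 5 (by omega) (by omega) (by omega))
      _ (Qmem q16).2 q16 (dd 3 6 (by omega) (by omega) (by omega))
      (dd 4 6 (by omega) (by omega) (by omega)) (dd 5 6 (by omega) (by omega) (by omega))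
    have h2 := deg4 _ (Qmem q24).1 _ (Qmem q24).2 q24 _ (Qmem q25).2 q25
      (dd 4 5 (by omega) (by omega) (by omega)) _ (Qmem q26).2 q26
      (dd 4 6 (by omega) (by omega) (by omega)) (dd 5 6 (by omega) (by omega) (by omega))
      _ (Qmem q20).2 q20 (dd 4 0 (by omega) (by omega) (by omega))
      (dd 5 0 (by omega) (by omega) (by omega)) (dd 6 0 (by omega) (by omega) (by omega))
    have h3 := deg4 _ (Qmem q35).1 _ (Qmem q35).2 q35 _ (Qmem q36).2 q36
      (dd 5 6 (by omega) (by omega) (by omega)) _ (Qmem q30).2 q30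
      (dd 5 0 (by omega) (by omega) (by omega)) (dd 6 0 (by omega) (by omega) (by omega))
      _ (Qmem q31).2 q31 (dd 5 1 (by omega) (by omega) (by omega))
      (dd 6 1 (by omega) (by omega) (by omega)) (dd 0 1 (by omega) (by omega) (by omega))
    have d01 := dd 0 1 (by omega) (by omega) (by omega)
    have d02 := dd 0 2 (by omega) (by omega) (by omega)
    have d03 := dd 0 3 (by omega) (by omega) (by omega)
    have d12 := dd 1 2 (by omega) (by omega) (by omega)
    have d13 := dd 1 3 (by omega) (by omega) (by omega)
    have d23 := dd 2 3 (by omega) (by omega) (by omega)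
    omega
end

section
/- Let X, Y, Z, U be random variables on a probability space, each taking values in a finite set, such that X, Y, Z are mutually independent and H(U | (X,Y)) = 0 and H(U | (X,Z)) = 0. Then H(U | X) = 0. -/
open MeasureTheory

/-- The Shannon entropy (in nats) of a random variable `X` taking values in a finite set:
`H(X) = ∑ₛ -P(X = s) log P(X = s)`. -/
noncomputable def entropy {Ω S : Type*} [MeasurableSpace Ω] [Fintype S]
    (μ : Measure Ω) (X : Ω → S) : ℝ :=
  ∑ s : S, Real.negMulLog ((μ (X ⁻¹' {s})).toReal)

/-- The conditional Shannon entropy `H(U | V) = H(U, V) - H(V)` of finitely valued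
random variables. -/
noncomputable def condEntropy {Ω S T : Type*} [MeasurableSpace Ω] [Fintype S] [Fintype T]
    (μ : Measure Ω) (U : Ω → S) (V : Ω → T) : ℝ :=
  entropy μ (fun ω => (U ω, V ω)) - entropy μ V

set_option linter.unusedSectionVars false

section Aux
variable {Ω S T : Type*} [MeasurableSpace Ω] [Fintype S] [Fintype T]
  [MeasurableSpace S] [MeasurableSingletonClass S]
  [MeasurableSpace T] [MeasurableSingletonClass T]
  (μ : Measure Ω) [IsProbabilityMeasure μ]
  (U : Ω → S) (V : Ω → T)

lemma marginal_eq_sum (hU : Measurable U) (hV : Measurable V) (t : T) :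
    μ (V ⁻¹' {t}) = ∑ s : S, μ (U ⁻¹' {s} ∩ V ⁻¹' {t}) := by
  have hcover : V ⁻¹' {t} = ⋃ s : S, U ⁻¹' {s} ∩ V ⁻¹' {t} := by
    ext ω; simp
  have hd : Pairwise (Function.onFun Disjoint (fun s : S => U ⁻¹' {s} ∩ V ⁻¹' {t})) := by
    intro s s' hss
    simp only [Function.onFun, Set.disjoint_left]
    rintro ω ⟨h1, -⟩ ⟨h2, -⟩
    exact hss (h1.symm.trans h2)
  have hm : ∀ s : S, MeasurableSet (U ⁻¹' {s} ∩ V ⁻¹' {t}) :=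
    fun s => (hU (measurableSet_singleton s)).inter (hV (measurableSet_singleton t))
  have hiu := measure_iUnion (μ := μ) hd hm
  rw [← hcover] at hiu
  rw [hiu, tsum_fintype]

lemma condEntropy_eq_sum (hU : Measurable U) (hV : Measurable V) :
    condEntropy μ U V = ∑ t : T, ∑ s : S,
      (μ (U ⁻¹' {s} ∩ V ⁻¹' {t})).toReal *
        (Real.log (μ (V ⁻¹' {t})).toReal -
          Real.log (μ (U ⁻¹' {s} ∩ V ⁻¹' {t})).toReal) := by
  have hpre : ∀ (s : S) (t : T),
      (fun ω => (U ω, V ω)) ⁻¹' {(s, t)} = U ⁻¹' {s} ∩ V ⁻¹' {t} := by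
    intro s t; ext ω; simp [Prod.ext_iff]
  have hmarg : ∀ t : T, (μ (V ⁻¹' {t})).toReal =
      ∑ s : S, (μ (U ⁻¹' {s} ∩ V ⁻¹' {t})).toReal := by
    intro t
    rw [marginal_eq_sum μ U V hU hV t]
    exact ENNReal.toReal_sum (fun _ _ => measure_ne_top μ _)
  unfold condEntropy entropy
  rw [Fintype.sum_prod_type, Finset.sum_comm, ← Finset.sum_sub_distrib]
  refine Finset.sum_congr rfl fun t _ => ?_
  simp only [hpre]
  set p : S → ℝ := fun s => (μ (U ⁻¹' {s} ∩ V ⁻¹' {t})).toReal with hp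
  rw [hmarg t]
  have : Real.negMulLog (∑ s : S, p s)
      = ∑ s : S, (-(p s) * Real.log (∑ s' : S, p s')) := by
    rw [Real.negMulLog, ← Finset.sum_neg_distrib, Finset.sum_mul]
  rw [this, ← Finset.sum_sub_distrib]
  refine Finset.sum_congr rfl fun s _ => ?_
  simp only [Real.negMulLog]
  ring


lemma det_of_condEntropy_zero (hU : Measurable U) (hV : Measurable V)
    (h : condEntropy μ U V = 0) (s : S) (t : T) :
    μ (U ⁻¹' {s} ∩ V ⁻¹' {t}) = 0 ∨ μ (U ⁻¹' {s} ∩ V ⁻¹' {t}) = μ (V ⁻¹' {t}) := by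
  rw [condEntropy_eq_sum μ U V hU hV] at h
  set f : T → S → ℝ := fun t s => (μ (U ⁻¹' {s} ∩ V ⁻¹' {t})).toReal *
      (Real.log (μ (V ⁻¹' {t})).toReal - Real.log (μ (U ⁻¹' {s} ∩ V ⁻¹' {t})).toReal) with hf
  have hle : ∀ (t : T) (s : S),
      (μ (U ⁻¹' {s} ∩ V ⁻¹' {t})).toReal ≤ (μ (V ⁻¹' {t})).toReal :=
    fun t s => ENNReal.toReal_mono (measure_ne_top μ _)
      (measure_mono Set.inter_subset_right)
  have hnn : ∀ (t : T) (s : S), 0 ≤ f t s := by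
    intro t s
    rcases eq_or_lt_of_le (ENNReal.toReal_nonneg
        (a := μ (U ⁻¹' {s} ∩ V ⁻¹' {t}))) with hp | hp
    · simp [hf, ← hp]
    · exact mul_nonneg hp.le (sub_nonneg.mpr (Real.log_le_log hp (hle t s)))
  have hzero : ∀ (t : T) (s : S), f t s = 0 := by
    have h1 : ∀ t ∈ Finset.univ, ∑ s : S, f t s = 0 :=
      (Finset.sum_eq_zero_iff_of_nonneg
        (fun t _ => Finset.sum_nonneg fun s _ => hnn t s)).mp h
    intro t s
    exact (Finset.sum_eq_zero_iff_of_nonneg (fun s _ => hnn t s)).mp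
      (h1 t (Finset.mem_univ t)) s (Finset.mem_univ s)
  have := hzero t s
  rw [hf] at this
  rcases mul_eq_zero.mp this with h0 | h0
  · left
    have := (ENNReal.toReal_eq_zero_iff _).mp h0
    exact this.resolve_right (measure_ne_top μ _)
  · rcases eq_or_lt_of_le (ENNReal.toReal_nonneg
        (a := μ (U ⁻¹' {s} ∩ V ⁻¹' {t}))) with hp | hp
    · left
      have := (ENNReal.toReal_eq_zero_iff _).mp hp.symm
      exact this.resolve_right (measure_ne_top μ _)
    · right
      have hlog : Real.log (μ (V ⁻¹' {t})).toReal
          = Real.log (μ (U ⁻¹' {s} ∩ V ⁻¹' {t})).toReal := by linarith [sub_eq_zero.mp h0]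
      have hq : (0:ℝ) < (μ (V ⁻¹' {t})).toReal := lt_of_lt_of_le hp (hle t s)
      have := Real.log_injOn_pos (Set.mem_Ioi.mpr hq) (Set.mem_Ioi.mpr hp) hlog
      exact ((ENNReal.toReal_eq_toReal_iff' (measure_ne_top μ _) (measure_ne_top μ _)).mp this.symm)

lemma condEntropy_zero_of_det (hU : Measurable U) (hV : Measurable V)
    (h : ∀ (s : S) (t : T),
      μ (U ⁻¹' {s} ∩ V ⁻¹' {t}) = 0 ∨ μ (U ⁻¹' {s} ∩ V ⁻¹' {t}) = μ (V ⁻¹' {t})) :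
    condEntropy μ U V = 0 := by
  rw [condEntropy_eq_sum μ U V hU hV]
  refine Finset.sum_eq_zero fun t _ => Finset.sum_eq_zero fun s _ => ?_
  rcases h s t with h0 | h0
  · simp [h0]
  · simp [h0]

end Aux

section Helpers
variable {Ω : Type*} [MeasurableSpace Ω] (μ : Measure Ω)

lemma null_diff_of_inter [IsFiniteMeasure μ] {T S : Set Ω} (hT : MeasurableSet T)
    (h : μ (T ∩ S) = μ S) : μ (S \ T) = 0 := by
  have h1 : μ (S ∩ T) + μ (S \ T) = μ S := measure_inter_add_diff S hT
  rw [Set.inter_comm, h] at h1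
  have h2 : μ S + μ (S \ T) = μ S + 0 := by rw [add_zero, h1]
  exact (ENNReal.add_right_inj (measure_ne_top μ S)).mp h2

lemma inter_eq_of_null_diff {S' S'' T : Set Ω} (hsub : S'' ⊆ S') (hT : MeasurableSet T)
    (h : μ (S' \ T) = 0) : μ (T ∩ S'') = μ S'' := by
  have h1 : μ (S'' ∩ T) + μ (S'' \ T) = μ S'' := measure_inter_add_diff _ hT
  have h2 : μ (S'' \ T) = 0 := measure_mono_null (Set.diff_subset_diff_left hsub) h
  rw [h2, add_zero] at h1
  rw [Set.inter_comm]
  exact h1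

lemma measure_eq_sum_inter {C : Type*} [Fintype C] [MeasurableSpace C]
    [MeasurableSingletonClass C] (Z : Ω → C) (hZ : Measurable Z)
    {W : Set Ω} (hW : MeasurableSet W) : μ W = ∑ c : C, μ (W ∩ Z ⁻¹' {c}) := by
  have hcover : W = ⋃ c : C, W ∩ Z ⁻¹' {c} := by ext ω; simp
  have hd : Pairwise (Function.onFun Disjoint (fun c : C => W ∩ Z ⁻¹' {c})) := by
    intro c c' hcc
    simp only [Function.onFun, Set.disjoint_left]
    rintro ω ⟨-, h1⟩ ⟨-, h2⟩
    exact hcc (h1.symm.trans h2)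
  have hm : ∀ c : C, MeasurableSet (W ∩ Z ⁻¹' {c}) :=
    fun c => hW.inter (hZ (measurableSet_singleton c))
  have hiu := measure_iUnion (μ := μ) hd hm
  rw [← hcover] at hiu
  rw [hiu, tsum_fintype]

lemma sum_measure_preimage_one {C : Type*} [Fintype C] [MeasurableSpace C]
    [MeasurableSingletonClass C] [IsProbabilityMeasure μ] (Z : Ω → C) (hZ : Measurable Z) :
    ∑ c : C, μ (Z ⁻¹' {c}) = 1 := by
  have := measure_eq_sum_inter μ Z hZ (MeasurableSet.univ)
  simp only [Set.univ_inter, measure_univ] at this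
  exact this.symm

end Helpers

/-- If `X, Y, Z` are mutually independent finitely valued random variables and
`H(U | (X, Y)) = H(U | (X, Z)) = 0`, then `H(U | X) = 0`. -/
theorem condEntropy_eq_zero_of_two_sides
    {Ω A B C D : Type*} [MeasurableSpace Ω]
    [Fintype A] [Fintype B] [Fintype C] [Fintype D]
    [MeasurableSpace A] [MeasurableSingletonClass A]
    [MeasurableSpace B] [MeasurableSingletonClass B]
    [MeasurableSpace C] [MeasurableSingletonClass C]
    [MeasurableSpace D] [MeasurableSingletonClass D]
    (μ : Measure Ω) [IsProbabilityMeasure μ]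
    (X : Ω → A) (Y : Ω → B) (Z : Ω → C) (U : Ω → D)
    (hX : Measurable X) (hY : Measurable Y) (hZ : Measurable Z) (hU : Measurable U)
    (hindep : ∀ (a : A) (b : B) (c : C),
      μ (X ⁻¹' {a} ∩ Y ⁻¹' {b} ∩ Z ⁻¹' {c}) =
        μ (X ⁻¹' {a}) * μ (Y ⁻¹' {b}) * μ (Z ⁻¹' {c}))
    (hUXY : condEntropy μ U (fun ω => (X ω, Y ω)) = 0)
    (hUXZ : condEntropy μ U (fun ω => (X ω, Z ω)) = 0) :
    condEntropy μ U X = 0 := by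
  -- measurability of basic sets
  have hXm : ∀ a, MeasurableSet (X ⁻¹' {a}) := fun a => hX (measurableSet_singleton a)
  have hYm : ∀ b, MeasurableSet (Y ⁻¹' {b}) := fun b => hY (measurableSet_singleton b)
  have hZm : ∀ c, MeasurableSet (Z ⁻¹' {c}) := fun c => hZ (measurableSet_singleton c)
  have hUm : ∀ d, MeasurableSet (U ⁻¹' {d}) := fun d => hU (measurableSet_singleton d)
  -- marginal independence
  have hXY : ∀ a b, μ (X ⁻¹' {a} ∩ Y ⁻¹' {b}) = μ (X ⁻¹' {a}) * μ (Y ⁻¹' {b}) := by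
    intro a b
    rw [measure_eq_sum_inter μ Z hZ ((hXm a).inter (hYm b))]
    simp only [hindep]
    rw [← Finset.mul_sum, sum_measure_preimage_one μ Z hZ, mul_one]
  have hXZ : ∀ a c, μ (X ⁻¹' {a} ∩ Z ⁻¹' {c}) = μ (X ⁻¹' {a}) * μ (Z ⁻¹' {c}) := by
    intro a c
    rw [measure_eq_sum_inter μ Y hY ((hXm a).inter (hZm c))]
    have hre : ∀ b : B, X ⁻¹' {a} ∩ Z ⁻¹' {c} ∩ Y ⁻¹' {b}
        = X ⁻¹' {a} ∩ Y ⁻¹' {b} ∩ Z ⁻¹' {c} := by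
      intro b; ext ω; simp; tauto
    simp only [hre, hindep]
    have : ∀ b : B, μ (X ⁻¹' {a}) * μ (Y ⁻¹' {b}) * μ (Z ⁻¹' {c})
        = μ (X ⁻¹' {a}) * μ (Z ⁻¹' {c}) * μ (Y ⁻¹' {b}) := fun b => by ring
    simp only [this]
    rw [← Finset.mul_sum, sum_measure_preimage_one μ Y hY, mul_one]
  -- determinism from zero conditional entropies
  have hpreY : ∀ (a : A) (b : B),
      (fun ω => (X ω, Y ω)) ⁻¹' {(a, b)} = X ⁻¹' {a} ∩ Y ⁻¹' {b} := by
    intro a b; ext ω; simp [Prod.ext_iff]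
  have hpreZ : ∀ (a : A) (c : C),
      (fun ω => (X ω, Z ω)) ⁻¹' {(a, c)} = X ⁻¹' {a} ∩ Z ⁻¹' {c} := by
    intro a c; ext ω; simp [Prod.ext_iff]
  have detXY : ∀ (d : D) (a : A) (b : B),
      μ (U ⁻¹' {d} ∩ (X ⁻¹' {a} ∩ Y ⁻¹' {b})) = 0 ∨
      μ (U ⁻¹' {d} ∩ (X ⁻¹' {a} ∩ Y ⁻¹' {b})) = μ (X ⁻¹' {a} ∩ Y ⁻¹' {b}) := by
    intro d a b
    have := det_of_condEntropy_zero μ U (fun ω => (X ω, Y ω)) hU (hX.prodMk hY)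
      hUXY d (a, b)
    rwa [hpreY a b] at this
  have detXZ : ∀ (d : D) (a : A) (c : C),
      μ (U ⁻¹' {d} ∩ (X ⁻¹' {a} ∩ Z ⁻¹' {c})) = 0 ∨
      μ (U ⁻¹' {d} ∩ (X ⁻¹' {a} ∩ Z ⁻¹' {c})) = μ (X ⁻¹' {a} ∩ Z ⁻¹' {c}) := by
    intro d a c
    have := det_of_condEntropy_zero μ U (fun ω => (X ω, Z ω)) hU (hX.prodMk hZ)
      hUXZ d (a, c)
    rwa [hpreZ a c] at this
  -- key determinism for X alone
  have det : ∀ (d : D) (a : A),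
      μ (U ⁻¹' {d} ∩ X ⁻¹' {a}) = 0 ∨ μ (U ⁻¹' {d} ∩ X ⁻¹' {a}) = μ (X ⁻¹' {a}) := by
    intro d a
    by_cases hXa : μ (X ⁻¹' {a}) = 0
    · exact Or.inl (measure_mono_null Set.inter_subset_right hXa)
    by_cases hb : ∃ b : B, μ (Y ⁻¹' {b}) ≠ 0 ∧ μ (U ⁻¹' {d} ∩ (X ⁻¹' {a} ∩ Y ⁻¹' {b})) ≠ 0
    · right
      obtain ⟨b₀, hb₀, hbne⟩ := hb
      -- b₀ cell is full
      have hfull₀ : μ (U ⁻¹' {d} ∩ (X ⁻¹' {a} ∩ Y ⁻¹' {b₀})) = μ (X ⁻¹' {a} ∩ Y ⁻¹' {b₀}) :=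
        (detXY d a b₀).resolve_left hbne
      have hnull₀ : μ ((X ⁻¹' {a} ∩ Y ⁻¹' {b₀}) \ U ⁻¹' {d}) = 0 :=
        null_diff_of_inter μ (hUm d) hfull₀
      -- find c₀ with positive probability
      obtain ⟨c₀, hc₀⟩ : ∃ c : C, μ (Z ⁻¹' {c}) ≠ 0 := by
        by_contra hcon
        push_neg at hcon
        have := sum_measure_preimage_one μ Z hZ
        simp only [hcon] at this
        simp at this
      -- the (a, c₀) cell of (X, Z) is full
      have h3pos : μ (X ⁻¹' {a} ∩ Y ⁻¹' {b₀} ∩ Z ⁻¹' {c₀}) ≠ 0 := by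
        rw [hindep]
        exact mul_ne_zero (mul_ne_zero hXa hb₀) hc₀
      have hsub1 : X ⁻¹' {a} ∩ Y ⁻¹' {b₀} ∩ Z ⁻¹' {c₀} ⊆ X ⁻¹' {a} ∩ Y ⁻¹' {b₀} :=
        Set.inter_subset_left
      have h4 : μ (U ⁻¹' {d} ∩ (X ⁻¹' {a} ∩ Y ⁻¹' {b₀} ∩ Z ⁻¹' {c₀}))
          = μ (X ⁻¹' {a} ∩ Y ⁻¹' {b₀} ∩ Z ⁻¹' {c₀}) :=
        inter_eq_of_null_diff μ hsub1 (hUm d) hnull₀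
      have hZfullne : μ (U ⁻¹' {d} ∩ (X ⁻¹' {a} ∩ Z ⁻¹' {c₀})) ≠ 0 := by
        intro h0
        apply h3pos
        rw [← h4]
        refine measure_mono_null ?_ h0
        rintro ω ⟨h1, ⟨h2, h3⟩, h5⟩
        exact ⟨h1, h2, h5⟩
      have hZfull : μ (U ⁻¹' {d} ∩ (X ⁻¹' {a} ∩ Z ⁻¹' {c₀})) = μ (X ⁻¹' {a} ∩ Z ⁻¹' {c₀}) :=
        (detXZ d a c₀).resolve_left hZfullne
      have hZnull : μ ((X ⁻¹' {a} ∩ Z ⁻¹' {c₀}) \ U ⁻¹' {d}) = 0 :=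
        null_diff_of_inter μ (hUm d) hZfull
      -- every positive y cell is full
      have hallb : ∀ b : B, μ (U ⁻¹' {d} ∩ (X ⁻¹' {a} ∩ Y ⁻¹' {b})) = μ (X ⁻¹' {a} ∩ Y ⁻¹' {b}) := by
        intro b
        by_cases hYb : μ (Y ⁻¹' {b}) = 0
        · rw [measure_mono_null (fun ω hω => hω.2.2) hYb,
            measure_mono_null (fun ω hω => hω.2) hYb]
        · have h3pos' : μ (X ⁻¹' {a} ∩ Y ⁻¹' {b} ∩ Z ⁻¹' {c₀}) ≠ 0 := by
            rw [hindep]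
            exact mul_ne_zero (mul_ne_zero hXa hYb) hc₀
          have hsub2 : X ⁻¹' {a} ∩ Y ⁻¹' {b} ∩ Z ⁻¹' {c₀} ⊆ X ⁻¹' {a} ∩ Z ⁻¹' {c₀} := by
            rintro ω ⟨⟨h1, h2⟩, h3⟩; exact ⟨h1, h3⟩
          have h4' : μ (U ⁻¹' {d} ∩ (X ⁻¹' {a} ∩ Y ⁻¹' {b} ∩ Z ⁻¹' {c₀}))
              = μ (X ⁻¹' {a} ∩ Y ⁻¹' {b} ∩ Z ⁻¹' {c₀}) :=
            inter_eq_of_null_diff μ hsub2 (hUm d) hZnull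
          have hne : μ (U ⁻¹' {d} ∩ (X ⁻¹' {a} ∩ Y ⁻¹' {b})) ≠ 0 := by
            intro h0
            apply h3pos'
            rw [← h4']
            refine measure_mono_null ?_ h0
            rintro ω ⟨h1, ⟨h2, h3⟩, h5⟩
            exact ⟨h1, h2, h3⟩
          exact (detXY d a b).resolve_left hne
      -- sum over b
      have hsumU : μ (U ⁻¹' {d} ∩ X ⁻¹' {a}) = ∑ b : B, μ (U ⁻¹' {d} ∩ (X ⁻¹' {a} ∩ Y ⁻¹' {b})) := by
        rw [measure_eq_sum_inter μ Y hY ((hUm d).inter (hXm a))]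
        congr 1
        ext b
        rw [Set.inter_assoc]
      have hsumX : μ (X ⁻¹' {a}) = ∑ b : B, μ (X ⁻¹' {a} ∩ Y ⁻¹' {b}) :=
        measure_eq_sum_inter μ Y hY (hXm a)
      rw [hsumU, hsumX]
      exact Finset.sum_congr rfl fun b _ => hallb b
    · left
      push_neg at hb
      rw [measure_eq_sum_inter μ Y hY ((hUm d).inter (hXm a))]
      refine Finset.sum_eq_zero fun b _ => ?_
      by_cases hYb : μ (Y ⁻¹' {b}) = 0
      · exact measure_mono_null (fun ω hω => hω.2) hYb
      · have := hb b hYb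
        rw [Set.inter_assoc]
        exact this
  exact condEntropy_zero_of_det μ U X hU hX fun d a => det d a
end

section
/- Let W and K be independent random variables on a probability space, where W is uniformly distributed on a finite nonempty set B and K takes values in a finite set. Let D be a finite set with |D| ≤ |B|, let f : B × (values of K) → D, and set C = f(W, K). If there is a function g with g(C, K) = W almost surely, then |D| = |B|, C is uniformly distributed on D, and C is independent of K. -/
open MeasureTheory

/-- Let `W` be uniformly distributed on a finite nonempty set `B`, let `K` be a finitely
valued random variable independent of `W`, let `D` be a finite set with `|D| ≤ |B|`, and let
`C = f(W, K)` for some `f : B × T → D`. If `W` can be recovered from `(C, K)` almost surely,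
then `|D| = |B|`, `C` is uniformly distributed on `D`, and `C` is independent of `K`. -/
theorem uniform_output_of_decodable
    {Ω B T D : Type*} [MeasurableSpace Ω]
    [Fintype B] [Nonempty B] [Fintype T] [Fintype D]
    [MeasurableSpace B] [MeasurableSingletonClass B]
    [MeasurableSpace T] [MeasurableSingletonClass T]
    (μ : Measure Ω) [IsProbabilityMeasure μ]
    (W : Ω → B) (K : Ω → T)
    (hW : Measurable W) (hK : Measurable K)
    (hunif : ∀ b : B, μ (W ⁻¹' {b}) = 1 / (Fintype.card B : ENNReal))
    (hindep : ∀ (b : B) (t : T),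
      μ (W ⁻¹' {b} ∩ K ⁻¹' {t}) = μ (W ⁻¹' {b}) * μ (K ⁻¹' {t}))
    (hcard : Fintype.card D ≤ Fintype.card B)
    (f : B × T → D) (C : Ω → D) (hC : ∀ ω, C ω = f (W ω, K ω))
    (g : D × T → B) (hg : μ {ω | g (C ω, K ω) = W ω} = 1) :
    Fintype.card D = Fintype.card B ∧
      (∀ d : D, μ (C ⁻¹' {d}) = 1 / (Fintype.card D : ENNReal)) ∧
      (∀ (d : D) (t : T),
        μ (C ⁻¹' {d} ∩ K ⁻¹' {t}) = μ (C ⁻¹' {d}) * μ (K ⁻¹' {t})) := by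
  classical
  have hCm : ∀ d : D, MeasurableSet (C ⁻¹' {d}) := by
    intro d
    have h : C ⁻¹' {d} = (fun ω => (W ω, K ω)) ⁻¹' {p : B × T | f p = d} := by
      ext ω; simp [hC]
    rw [h]
    exact (hW.prodMk hK) ((Set.toFinite _).measurableSet)
  have hKm : ∀ t : T, MeasurableSet (K ⁻¹' {t}) := fun t => hK (measurableSet_singleton t)
  -- decoding holds pointwise on atoms of positive probability
  have hdec : ∀ t : T, μ (K ⁻¹' {t}) ≠ 0 → ∀ b : B, g (f (b, t), t) = b := by
    intro t ht b
    by_contra hne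
    have hA : MeasurableSet {ω | g (C ω, K ω) = W ω} := by
      have h : {ω | g (C ω, K ω) = W ω}
          = (fun ω => (W ω, K ω)) ⁻¹' {p : B × T | g (f p, p.2) = p.1} := by
        ext ω; simp [hC]
      rw [h]
      exact (hW.prodMk hK) ((Set.toFinite _).measurableSet)
    have hcompl : μ {ω | g (C ω, K ω) = W ω}ᶜ = 0 := by
      rw [measure_compl hA (measure_ne_top μ _), hg, measure_univ, tsub_self]
    have hsub : W ⁻¹' {b} ∩ K ⁻¹' {t} ⊆ {ω | g (C ω, K ω) = W ω}ᶜ := by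
      rintro ω ⟨hb, htω⟩
      simp only [Set.mem_preimage, Set.mem_singleton_iff] at hb htω
      simp only [Set.mem_compl_iff, Set.mem_setOf_eq, hC, hb, htω]
      exact hne
    have hE : μ (W ⁻¹' {b} ∩ K ⁻¹' {t}) ≠ 0 := by
      rw [hindep b t, hunif b]
      refine mul_ne_zero ?_ ht
      simp [ENNReal.div_eq_zero_iff, Fintype.card_ne_zero]
    exact hE (le_antisymm (hcompl ▸ measure_mono hsub) zero_le)
  have hbij : ∀ t : T, μ (K ⁻¹' {t}) ≠ 0 → Function.Bijective (fun b => f (b, t)) := by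
    intro t ht
    have hinj : Function.Injective (fun b => f (b, t)) := by
      intro b₁ b₂ h
      have h1 := hdec t ht b₁
      rw [show f (b₁, t) = f (b₂, t) from h, hdec t ht b₂] at h1
      exact h1.symm
    refine (Fintype.bijective_iff_injective_and_card _).mpr ⟨hinj, ?_⟩
    exact le_antisymm (Fintype.card_le_of_injective _ hinj) hcard
  obtain ⟨t₀, ht₀⟩ : ∃ t : T, μ (K ⁻¹' {t}) ≠ 0 := by
    by_contra h
    push_neg at h
    have huniv : μ (Set.univ : Set Ω) = 0 := by
      have heq : (Set.univ : Set Ω) = ⋃ t : T, K ⁻¹' {t} := by ext ω; simp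
      rw [heq]
      refine le_antisymm (le_trans (measure_iUnion_le _) ?_) zero_le
      simp [h]
    simp [measure_univ] at huniv
  have hcardeq : Fintype.card D = Fintype.card B :=
    le_antisymm hcard (Fintype.card_le_of_injective _ (hbij t₀ ht₀).injective)
  have hkey : ∀ (d : D) (t : T),
      μ (C ⁻¹' {d} ∩ K ⁻¹' {t}) = 1 / (Fintype.card D : ENNReal) * μ (K ⁻¹' {t}) := by
    intro d t
    by_cases ht : μ (K ⁻¹' {t}) = 0
    · rw [ht, mul_zero]
      exact le_antisymm (le_trans (measure_mono Set.inter_subset_right) ht.le) zero_le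
    · obtain ⟨b, hb⟩ := (hbij t ht).surjective d
      have hset : C ⁻¹' {d} ∩ K ⁻¹' {t} = W ⁻¹' {b} ∩ K ⁻¹' {t} := by
        ext ω
        simp only [Set.mem_inter_iff, Set.mem_preimage, Set.mem_singleton_iff, hC]
        constructor
        · rintro ⟨h1, h2⟩
          rw [h2] at h1
          exact ⟨(hbij t ht).injective (h1.trans hb.symm), h2⟩
        · rintro ⟨h1, h2⟩
          rw [h1, h2]; exact ⟨hb, rfl⟩
      rw [hset, hindep b t, hunif b, hcardeq]
  have hsumK : ∑ t : T, μ (K ⁻¹' {t}) = 1 := by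
    have h := sum_measure_preimage_singleton (μ := μ) (Finset.univ : Finset T)
      (fun t _ => hKm t)
    simpa using h
  have hmarg : ∀ d : D, μ (C ⁻¹' {d}) = 1 / (Fintype.card D : ENNReal) := by
    intro d
    have hdecomp : C ⁻¹' {d} = ⋃ t ∈ (Finset.univ : Finset T), (C ⁻¹' {d} ∩ K ⁻¹' {t}) := by
      ext ω; simp
    have hdisj : ((Finset.univ : Finset T) : Set T).PairwiseDisjoint
        (fun t => C ⁻¹' {d} ∩ K ⁻¹' {t}) := by
      intro t1 _ t2 _ hne
      refine Set.disjoint_left.mpr ?_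
      rintro ω ⟨_, h1⟩ ⟨_, h2⟩
      simp only [Set.mem_preimage, Set.mem_singleton_iff] at h1 h2
      exact hne (h1 ▸ h2 ▸ rfl)
    rw [hdecomp, measure_biUnion_finset hdisj (fun t _ => (hCm d).inter (hKm t))]
    simp_rw [hkey d]
    rw [← Finset.mul_sum, hsumK, mul_one]
  exact ⟨hcardeq, hmarg, fun d t => by rw [hkey d t, hmarg d]⟩
end
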